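/- arXiv:2302.02540 — 2 statements merged into one kernel-verified Lean document; each statement's English description precedes it below -/
import Mathlib

section
/- For every x > 0, 16/x² < 1/(2·log(cosh(x/4))). -/
lemma cosh_lt_exp_half_sq_aux (t : ℝ) (ht : 0 < t) :
    Real.cosh t < Real.exp (t ^ 2 / 2) := by
  have h1 : Real.cosh t = 2 * Real.cosh (t / 2) ^ 2 - 1 := by
    have := Real.cosh_two_mul (t / 2)
    have h2 := Real.cosh_sq' (t / 2)
    rw [show 2 * (t / 2) = t by ring] at this
    rw [this, h2]; ring
  have hle : Real.cosh (t / 2) ≤ Real.exp ((t / 2) ^ 2 / 2) :=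
    Real.cosh_le_exp_half_sq (t / 2)
  have hy : (1 : ℝ) < Real.exp ((t / 2) ^ 2 / 2) := by
    rw [Real.one_lt_exp_iff]; positivity
  set y := Real.exp ((t / 2) ^ 2 / 2) with hyd
  have hcosh_pos : 0 < Real.cosh (t / 2) := Real.cosh_pos _
  have h3 : Real.cosh t ≤ 2 * y ^ 2 - 1 := by
    rw [h1]
    have : Real.cosh (t / 2) ^ 2 ≤ y ^ 2 := by
      apply pow_le_pow_left₀ hcosh_pos.le hle
    linarith
  have h4 : 2 * y ^ 2 - 1 < y ^ 4 := by nlinarith [pow_pos (show (0:ℝ) < y ^ 2 - 1 by nlinarith) 2]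
  have h5 : y ^ 4 = Real.exp (t ^ 2 / 2) := by
    rw [hyd, ← Real.exp_nat_mul]
    congr 1; ring
  linarith

theorem sixteen_div_sq_lt_inv_two_log_cosh (x : ℝ) (hx : 0 < x) :
    16 / x ^ 2 < 1 / (2 * Real.log (Real.cosh (x / 4))) := by
  have ht : 0 < x / 4 := by linarith
  have hc1 : 1 < Real.cosh (x / 4) := Real.one_lt_cosh.2 ht.ne'
  have hL : 0 < Real.log (Real.cosh (x / 4)) := Real.log_pos hc1
  have hlt : Real.cosh (x / 4) < Real.exp ((x / 4) ^ 2 / 2) :=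
    cosh_lt_exp_half_sq_aux _ ht
  have hlog : Real.log (Real.cosh (x / 4)) < (x / 4) ^ 2 / 2 := by
    calc Real.log (Real.cosh (x / 4)) < Real.log (Real.exp ((x / 4) ^ 2 / 2)) :=
          Real.log_lt_log (by positivity) hlt
      _ = (x / 4) ^ 2 / 2 := Real.log_exp _
  rw [div_lt_div_iff₀ (by positivity) (by positivity)]
  nlinarith
end

section
/- For α > 1/2, ∫₀^∞ η_α(x)² · x dx = 4α²/(4α − 2), where η_α is the normalized Bessel function. In particular this quantity is minimized over α > 1/2 at α = 1, where it equals 2, so ∫₀^∞ η_α(x)² x dx ≥ 2 with equality iff α = 1. -/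
/-- The normalized Bessel function `η_α(x) = 2^α Γ(α+1) J_α(x) / x^α`, given by its
power series, with `η_α(0) = 1`. -/
noncomputable def besselEta (α : ℝ) (x : ℝ) : ℝ :=
  Real.Gamma (α + 1) *
    ∑' n : ℕ, (-1) ^ n / (n.factorial * Real.Gamma (n + α + 1)) * (x / 2) ^ (2 * n)

open Filter MeasureTheory Set Topology

namespace BesselAux

/-- Coefficients of even terms. -/
noncomputable def bc (α : ℝ) (m : ℕ) : ℝ :=
  Real.Gamma (α + 1) * (-1) ^ m / (m.factorial * Real.Gamma (m + α + 1) * 4 ^ m)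

/-- Full coefficient sequence of the power series of `besselEta α`. -/
noncomputable def ac (α : ℝ) (n : ℕ) : ℝ := if 2 ∣ n then bc α (n / 2) else 0

/-- Coefficients of the derivative. -/
noncomputable def ac1 (α : ℝ) (n : ℕ) : ℝ := ((n : ℝ) + 1) * ac α (n + 1)

/-- Coefficients of the second derivative. -/
noncomputable def ac2 (α : ℝ) (n : ℕ) : ℝ := ((n : ℝ) + 1) * ac1 α (n + 1)

noncomputable def U (α : ℝ) (x : ℝ) : ℝ := ∑' n, ac α n * x ^ n
noncomputable def U1 (α : ℝ) (x : ℝ) : ℝ := ∑' n, ac1 α n * x ^ n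
noncomputable def U2 (α : ℝ) (x : ℝ) : ℝ := ∑' n, ac2 α n * x ^ n

/-- Decay property of a coefficient sequence. -/
def PDecay (a : ℕ → ℝ) : Prop :=
  ∀ (k : ℕ) (r : ℝ), 0 ≤ r → Summable fun n : ℕ => (n : ℝ) ^ k * |a n| * r ^ n

section general
variable {a : ℕ → ℝ} (pd : PDecay a)
include pd

theorem PDecay.summable (x : ℝ) : Summable fun n => a n * x ^ n := by
  refine Summable.of_norm_bounded (pd 0 |x| (abs_nonneg x)) fun n => ?_
  simp [abs_mul, abs_pow]

theorem PDecay.summable_succ (x : ℝ) : Summable fun n : ℕ => a n * x ^ (n + 1) := by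
  refine ((pd.summable x).mul_left x).congr fun n => ?_
  ring

theorem PDecay.shift : PDecay fun n => ((n : ℝ) + 1) * a (n + 1) := by
  intro k r hr
  rcases eq_or_lt_of_le hr with hr0 | hr0
  · apply summable_of_ne_finset_zero (s := {0})
    intro n hn
    simp only [Finset.mem_singleton] at hn
    rw [← hr0, zero_pow hn]
    ring
  · have hs : Summable fun n : ℕ =>
        r⁻¹ * (((n + 1 : ℕ) : ℝ) ^ (k + 1) * |a (n + 1)| * r ^ (n + 1)) := by
      exact ((pd (k + 1) r hr).comp_injective fun m n h => by omega).mul_left _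
    refine hs.of_nonneg_of_le (fun n => by positivity) fun n => ?_
    push_cast
    have h1 : ((n : ℝ)) ^ k ≤ ((n : ℝ) + 1) ^ k := by
      gcongr; linarith
    have h2 : (0 : ℝ) < ((n : ℝ) + 1) := by positivity
    have h3 : |(((n : ℝ)) + 1) * a (n + 1)| = ((n : ℝ) + 1) * |a (n + 1)| := by
      rw [abs_mul, abs_of_pos h2]
    rw [h3]
    have : r⁻¹ * (((n : ℝ) + 1) ^ (k + 1) * |a (n + 1)| * r ^ (n + 1)) =
        ((n : ℝ) + 1) ^ k * (((n : ℝ) + 1) * |a (n + 1)|) * r ^ n := by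
      field_simp
      ring
    rw [this]
    gcongr

theorem PDecay.hasDerivAt (x : ℝ) :
    HasDerivAt (fun y => ∑' n, a n * y ^ n) (∑' n : ℕ, ((n : ℝ) + 1) * a (n + 1) * x ^ n) x := by
  set R : ℝ := |x| + 1 with hR
  have hR1 : (1 : ℝ) ≤ R := by rw [hR]; have := abs_nonneg x; linarith
  have hR0 : (0 : ℝ) ≤ R := by linarith
  have hxR : x ∈ Metric.ball (0 : ℝ) R := by
    simp only [Metric.mem_ball, Real.dist_eq, sub_zero, hR]; linarith
  have hbound : ∀ (n : ℕ) (y : ℝ), y ∈ Metric.ball (0 : ℝ) R →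
      ‖(n : ℝ) * a n * y ^ (n - 1)‖ ≤ (n : ℝ) ^ 1 * |a n| * R ^ n := by
    intro n y hy
    simp only [Metric.mem_ball, Real.dist_eq, sub_zero] at hy
    have hyR : |y| ≤ R := le_of_lt hy
    rcases Nat.eq_zero_or_pos n with rfl | hn
    · simp
    · rw [norm_mul, norm_mul, norm_pow, Real.norm_eq_abs, Real.norm_eq_abs, Real.norm_eq_abs,
        pow_one, Nat.abs_cast]
      have h1 : |y| ^ (n - 1) ≤ R ^ (n - 1) := pow_le_pow_left₀ (abs_nonneg y) hyR _
      have h2 : R ^ (n - 1) ≤ R ^ n := pow_le_pow_right₀ hR1 (Nat.sub_le n 1)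
      have h3 : |y| ^ (n - 1) ≤ R ^ n := h1.trans h2
      exact mul_le_mul_of_nonneg_left h3
        (mul_nonneg (Nat.cast_nonneg n) (abs_nonneg (a n)))
  have key : HasDerivAt (fun y => ∑' n, a n * y ^ n)
      (∑' n : ℕ, (n : ℝ) * a n * x ^ (n - 1)) x := by
    refine hasDerivAt_tsum_of_isPreconnected (pd 1 R hR0) Metric.isOpen_ball
      ((convex_ball (0:ℝ) R).isPreconnected) (fun n y _ => ?_) hbound
      (Metric.mem_ball_self (by linarith)) ?_ hxR
    · simpa [mul_comm, mul_assoc, mul_left_comm] using (hasDerivAt_pow n y).const_mul (a n)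
    · apply summable_of_ne_finset_zero (s := {0})
      intro n hn
      simp only [Finset.mem_singleton] at hn
      simp [zero_pow hn]
  have hsum : Summable fun n : ℕ => (n : ℝ) * a n * x ^ (n - 1) := by
    refine Summable.of_norm_bounded (pd 1 R hR0) fun n => hbound n x hxR
  have : (∑' n : ℕ, (n : ℝ) * a n * x ^ (n - 1))
      = ∑' n : ℕ, ((n : ℝ) + 1) * a (n + 1) * x ^ n := by
    rw [Summable.tsum_eq_zero_add hsum]
    push_cast
    simp
  rwa [this] at key

end general

theorem fact_bound (m : ℕ) : ((2 * m).factorial : ℝ) ≤ 4 ^ m * (m.factorial : ℝ) ^ 2 := by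
  induction m with
  | zero => norm_num
  | succ m ih =>
    have h1 : 2 * (m + 1) = (2 * m + 1) + 1 := by ring
    rw [h1, Nat.factorial_succ, Nat.factorial_succ, Nat.factorial_succ]
    push_cast
    rw [pow_succ]
    have hm : (0 : ℝ) ≤ (m : ℝ) := Nat.cast_nonneg m
    have hf : (0 : ℝ) ≤ ((2 * m).factorial : ℝ) := Nat.cast_nonneg _
    have h4 : (0 : ℝ) < 4 ^ m := by positivity
    nlinarith [mul_le_mul_of_nonneg_left ih
      (show (0:ℝ) ≤ (2*(m:ℝ)+2) * (2*(m:ℝ)+1) by nlinarith),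
      mul_nonneg (mul_nonneg (le_of_lt h4) (sq_nonneg ((m.factorial : ℝ))))
        (show (0:ℝ) ≤ (m:ℝ) + 1 by linarith)]

section alpha
variable {α : ℝ} (hα : 1 / 2 < α)
include hα

theorem gamma_pos (m : ℕ) : 0 < Real.Gamma ((m : ℝ) + α + 1) := by
  apply Real.Gamma_pos_of_pos; positivity

theorem gamma_lb (m : ℕ) :
    (m.factorial : ℝ) * Real.Gamma (α + 1) ≤ Real.Gamma ((m : ℝ) + α + 1) := by
  induction m with
  | zero => simp
  | succ m ih =>
    have h0 : (0 : ℝ) ≤ (m : ℝ) := Nat.cast_nonneg m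
    have hne : ((m : ℝ) + α + 1) ≠ 0 := by positivity
    have hcast : (((m + 1 : ℕ)) : ℝ) + α + 1 = ((m : ℝ) + α + 1) + 1 := by push_cast; ring
    rw [hcast, Real.Gamma_add_one hne]
    have hfac : (((m + 1).factorial : ℕ) : ℝ) = ((m : ℝ) + 1) * (m.factorial : ℝ) := by
      rw [Nat.factorial_succ]; push_cast; ring
    rw [hfac]
    have hg : 0 < Real.Gamma (α + 1) := Real.Gamma_pos_of_pos (by linarith)
    have hgm : 0 < Real.Gamma ((m : ℝ) + α + 1) := gamma_pos hα m
    have hmf : (0 : ℝ) < (m.factorial : ℝ) := by exact_mod_cast m.factorial_pos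
    nlinarith [mul_le_mul_of_nonneg_left ih (show (0:ℝ) ≤ (m : ℝ) + α + 1 by positivity),
      mul_pos hmf hg]

omit hα in
theorem ac_even (m : ℕ) : ac α (2 * m) = bc α m := by
  simp [ac, Nat.mul_div_cancel_left m (by norm_num : 0 < 2)]

theorem hg0 : 0 < Real.Gamma (α + 1) := Real.Gamma_pos_of_pos (by linarith)

theorem abs_bc (m : ℕ) : |bc α m| =
    Real.Gamma (α + 1) / ((m.factorial : ℝ) * Real.Gamma ((m : ℝ) + α + 1) * 4 ^ m) := by
  have h1 := hg0 hα
  have h2 := gamma_pos hα m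
  have h3 : (0:ℝ) < (m.factorial : ℝ) := by exact_mod_cast m.factorial_pos
  have h4 : (0:ℝ) < (4:ℝ) ^ m := by positivity
  rw [bc, abs_div, abs_mul, abs_pow, abs_neg, abs_one, one_pow, mul_one,
    abs_of_pos h1, abs_of_pos (by positivity : (0:ℝ) < (m.factorial : ℝ) *
      Real.Gamma ((m : ℝ) + α + 1) * 4 ^ m)]

theorem abs_ac_le (n : ℕ) : |ac α n| ≤ 1 / (n.factorial : ℝ) := by
  by_cases h2 : 2 ∣ n
  · obtain ⟨m, rfl⟩ := h2
    rw [ac_even, abs_bc hα]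
    have hfp : (0:ℝ) < ((2*m).factorial : ℝ) := by exact_mod_cast (2*m).factorial_pos
    have h3 : (0:ℝ) < (m.factorial : ℝ) := by exact_mod_cast m.factorial_pos
    have h1 := hg0 hα
    have hgm := gamma_pos hα m
    have h4 : (0:ℝ) < (4:ℝ) ^ m := by positivity
    rw [div_le_div_iff₀ (by positivity) hfp, one_mul]
    have hb1 := fact_bound m
    have hb2 := gamma_lb hα m
    calc Real.Gamma (α + 1) * ((2*m).factorial : ℝ)
        ≤ Real.Gamma (α + 1) * (4 ^ m * (m.factorial : ℝ) ^ 2) := by nlinarith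
      _ = 4 ^ m * (m.factorial : ℝ) * ((m.factorial : ℝ) * Real.Gamma (α + 1)) := by ring
      _ ≤ 4 ^ m * (m.factorial : ℝ) * Real.Gamma ((m : ℝ) + α + 1) := by nlinarith
      _ = (m.factorial : ℝ) * Real.Gamma ((m : ℝ) + α + 1) * 4 ^ m := by ring
  · rw [ac, if_neg h2, abs_zero]
    positivity

theorem pdecay_ac : PDecay (ac α) := by
  intro k r hr
  have hsum := Real.summable_pow_div_factorial ((2:ℝ) ^ k * r)
  refine hsum.of_nonneg_of_le (fun n => by positivity) fun n => ?_
  have h1 : |ac α n| ≤ 1 / (n.factorial : ℝ) := abs_ac_le hα n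
  have h2 : ((n:ℝ)) ^ k ≤ ((2:ℝ) ^ k) ^ n := by
    calc ((n:ℝ)) ^ k ≤ ((2:ℝ) ^ n) ^ k :=
          pow_le_pow_left₀ (Nat.cast_nonneg n) (by exact_mod_cast (Nat.lt_two_pow_self (n := n)).le) k
      _ = ((2:ℝ) ^ k) ^ n := by rw [← pow_mul, ← pow_mul, Nat.mul_comm]
  have h3 : (0:ℝ) < (n.factorial : ℝ) := by exact_mod_cast n.factorial_pos
  calc ((n:ℝ)) ^ k * |ac α n| * r ^ n
      ≤ ((2:ℝ) ^ k) ^ n * (1 / (n.factorial : ℝ)) * r ^ n := by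
        have hrn : (0:ℝ) ≤ r ^ n := by positivity
        have hstep : ((n:ℝ)) ^ k * |ac α n| ≤ ((2:ℝ) ^ k) ^ n * (1 / (n.factorial : ℝ)) :=
          mul_le_mul h2 h1 (abs_nonneg _) (by positivity)
        exact mul_le_mul_of_nonneg_right hstep hrn
    _ = ((2:ℝ) ^ k * r) ^ n / (n.factorial : ℝ) := by
        rw [mul_pow]; field_simp

theorem ac_zero : ac α 0 = 1 := by
  have h1 := hg0 hα
  have : ac α 0 = Real.Gamma (α + 1) * 1 / (1 * Real.Gamma ((0:ℝ) + α + 1) * 1) := by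
    simp [ac, bc]
  rw [this, zero_add]
  field_simp

theorem ac_rec (n : ℕ) :
    ((n : ℝ) + 2) * ((n : ℝ) + 2 + 2 * α) * ac α (n + 2) + ac α n = 0 := by
  rcases Nat.even_or_odd n with ⟨m, rfl⟩ | ⟨m, rfl⟩
  · -- n = m + m
    have e1 : m + m = 2 * m := by ring
    have e2 : m + m + 2 = 2 * (m + 1) := by ring
    rw [e2, e1, ac_even, ac_even]
    have hco : ((2 * (m:ℝ)) + 2) * ((2 * (m:ℝ)) + 2 + 2 * α) * bc α (m + 1) + bc α m = 0 := by
      rw [bc, bc]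
      have hgrec : Real.Gamma ((((m+1):ℕ) : ℝ) + α + 1)
          = ((m : ℝ) + α + 1) * Real.Gamma ((m : ℝ) + α + 1) := by
        have hne : ((m : ℝ) + α + 1) ≠ 0 := by
          have : (0:ℝ) ≤ (m:ℝ) := Nat.cast_nonneg m
          positivity
        have hc : (((m+1):ℕ) : ℝ) + α + 1 = ((m : ℝ) + α + 1) + 1 := by push_cast; ring
        rw [hc, Real.Gamma_add_one hne]
      rw [hgrec, Nat.factorial_succ, pow_succ, pow_succ]
      have h3 : ((m.factorial : ℕ) : ℝ) ≠ 0 := by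
        exact_mod_cast m.factorial_pos.ne'
      have h4 : ((4:ℝ)) ^ m ≠ 0 := by positivity
      have h5 : Real.Gamma ((m : ℝ) + α + 1) ≠ 0 := (gamma_pos hα m).ne'
      have h6 : ((m : ℝ) + α + 1) ≠ 0 := by
        have : (0:ℝ) ≤ (m:ℝ) := Nat.cast_nonneg m
        positivity
      push_cast
      field_simp
      ring
    push_cast
    push_cast at hco
    linarith
  · -- n = 2 * m + 1, odd
    have h1 : ¬ (2 ∣ (2 * m + 1)) := by omega
    have h2 : ¬ (2 ∣ (2 * m + 1 + 2)) := by omega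
    rw [ac, ac, if_neg h1, if_neg h2]
    ring

theorem besselEta_eq (x : ℝ) : besselEta α x = U α x := by
  rw [besselEta, U, ← tsum_mul_left]
  have key : ∀ m : ℕ, Real.Gamma (α + 1) *
      ((-1) ^ m / (m.factorial * Real.Gamma (m + α + 1)) * (x / 2) ^ (2 * m))
      = ac α (2 * m) * x ^ (2 * m) := by
    intro m
    rw [ac_even, bc]
    have h3 : ((m.factorial : ℕ) : ℝ) ≠ 0 := by exact_mod_cast m.factorial_pos.ne'
    have h5 : Real.Gamma ((m : ℝ) + α + 1) ≠ 0 := (gamma_pos hα m).ne'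
    have hxp : (x / 2) ^ (2 * m) = x ^ (2 * m) / 4 ^ m := by
      rw [div_pow, pow_mul, pow_mul]
      norm_num
    rw [hxp]
    have h4 : ((4:ℝ)) ^ m ≠ 0 := by positivity
    field_simp
  rw [tsum_congr key]
  exact Function.Injective.tsum_eq (f := fun n => ac α n * x ^ n)
    (fun a b h => Nat.eq_of_mul_eq_mul_left (by norm_num) h :
      Function.Injective fun m : ℕ => 2 * m)
    (by
      intro n hn
      by_contra hmem
      rcases Decidable.em (2 ∣ n) with ⟨m, rfl⟩ | hodd
      · exact hmem ⟨m, rfl⟩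
      · apply hn
        simp only [Function.mem_support] at *
        rw [ac, if_neg hodd]
        ring)

theorem hasDerivAt_U (x : ℝ) : HasDerivAt (U α) (U1 α x) x :=
  (pdecay_ac hα).hasDerivAt x

theorem hasDerivAt_U1 (x : ℝ) : HasDerivAt (U1 α) (U2 α x) x :=
  ((pdecay_ac hα).shift).hasDerivAt x

theorem U_zero : U α 0 = 1 := by
  rw [U, tsum_eq_single 0 (fun n hn => by simp [zero_pow hn])]
  simp [ac_zero hα]

theorem pdecay_ac1 : PDecay (ac1 α) := (pdecay_ac hα).shift

theorem pdecay_ac2 : PDecay (ac2 α) := (pdecay_ac1 hα).shift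

omit hα in
theorem ac1_zero : ac1 α 0 = 0 := by
  simp [ac1, ac, Nat.dvd_one]

theorem coeff_rec (n : ℕ) :
    ac2 α n + (2 * α + 1) * ac1 α (n + 1) + ac α n = 0 := by
  have h := ac_rec hα n
  simp only [ac2, ac1]
  push_cast
  linear_combination h

theorem ode (x : ℝ) : x * U2 α x + (2 * α + 1) * U1 α x + x * U α x = 0 := by
  have pd := pdecay_ac hα
  have pd1 := pdecay_ac1 hα
  have pd2 := pdecay_ac2 hα
  have hs2 : Summable fun n : ℕ => ac2 α n * x ^ (n + 1) := pd2.summable_succ x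
  have hs1' : Summable fun n : ℕ => ac1 α (n + 1) * x ^ (n + 1) := by
    have := (pd1.summable x).comp_injective
      (fun a b h => by simpa using h : Function.Injective fun n : ℕ => n + 1)
    exact this.congr fun n => rfl
  have hs1 : Summable fun n : ℕ => (2 * α + 1) * (ac1 α (n + 1) * x ^ (n + 1)) :=
    hs1'.mul_left _
  have hs0 : Summable fun n : ℕ => ac α n * x ^ (n + 1) := pd.summable_succ x
  have e2 : x * U2 α x = ∑' n : ℕ, ac2 α n * x ^ (n + 1) := by
    rw [U2, ← tsum_mul_left]
    exact tsum_congr fun n => by ring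
  have e0 : x * U α x = ∑' n : ℕ, ac α n * x ^ (n + 1) := by
    rw [U, ← tsum_mul_left]
    exact tsum_congr fun n => by ring
  have e1 : (2 * α + 1) * U1 α x
      = ∑' n : ℕ, (2 * α + 1) * (ac1 α (n + 1) * x ^ (n + 1)) := by
    rw [U1, Summable.tsum_eq_zero_add (pd1.summable x), ac1_zero, zero_mul, zero_add, ← tsum_mul_left]
  rw [e2, e1, e0, ← Summable.tsum_add hs2 hs1, ← Summable.tsum_add (hs2.add hs1) hs0]
  rw [show (0:ℝ) = ∑' _ : ℕ, (0:ℝ) from tsum_zero.symm]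
  refine tsum_congr fun n => ?_
  have : ac2 α n * x ^ (n + 1) + (2 * α + 1) * (ac1 α (n + 1) * x ^ (n + 1))
      + ac α n * x ^ (n + 1)
      = (ac2 α n + (2 * α + 1) * ac1 α (n + 1) + ac α n) * x ^ (n + 1) := by ring
  rw [this, coeff_rec hα n, zero_mul]

end alpha

/-- The antiderivative of `x * (U α x)^2`. -/
noncomputable def FF (α : ℝ) (x : ℝ) : ℝ :=
  (x ^ 2 * ((U1 α x) ^ 2 + (U α x) ^ 2) + 4 * α * x * U α x * U1 α x
      + 4 * α ^ 2 * (U α x) ^ 2) / (2 - 4 * α)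

section alpha2
variable {α : ℝ} (hα : 1 / 2 < α)
include hα

theorem hasDerivAt_FF (x : ℝ) : HasDerivAt (FF α) ((U α x) ^ 2 * x) x := by
  have hu : HasDerivAt (U α) (U1 α x) x := hasDerivAt_U hα x
  have hu1 : HasDerivAt (U1 α) (U2 α x) x := hasDerivAt_U1 hα x
  have h1 : HasDerivAt (fun y : ℝ => y ^ 2) (2 * x) x := by
    simpa using hasDerivAt_pow 2 x
  have h2 : HasDerivAt (fun y => (U1 α y) ^ 2) (2 * U1 α x * U2 α x) x := by
    simpa using hu1.fun_pow 2
  have h3 : HasDerivAt (fun y => (U α y) ^ 2) (2 * U α x * U1 α x) x := by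
    simpa using hu.fun_pow 2
  have hA : HasDerivAt (fun y : ℝ => 4 * α * y) (4 * α) x := by
    simpa using (hasDerivAt_id x).const_mul (4 * α)
  have hN : HasDerivAt (fun y => y ^ 2 * ((U1 α y) ^ 2 + (U α y) ^ 2)
      + 4 * α * y * U α y * U1 α y + 4 * α ^ 2 * (U α y) ^ 2)
      (2 * x * ((U1 α x) ^ 2 + (U α x) ^ 2)
        + x ^ 2 * (2 * U1 α x * U2 α x + 2 * U α x * U1 α x)
        + ((4 * α * U α x + 4 * α * x * U1 α x) * U1 α x
            + 4 * α * x * U α x * U2 α x)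
        + 4 * α ^ 2 * (2 * U α x * U1 α x)) x := by
    have hB : HasDerivAt (fun y => 4 * α * y * U α y * U1 α y)
        ((4 * α * U α x + 4 * α * x * U1 α x) * U1 α x
          + 4 * α * x * U α x * U2 α x) x := by
      have := ((hA.fun_mul hu).fun_mul hu1)
      refine this.congr_deriv ?_
      try ring
    have hC := (h1.fun_mul (h2.fun_add h3)).fun_add hB |>.fun_add (h3.const_mul (4 * α ^ 2))
    refine hC.congr_deriv ?_
    try ring
  have hFF := hN.div_const (2 - 4 * α)
  have h2α : (2 - 4 * α) ≠ 0 := by intro h; linarith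
  refine hFF.congr_deriv (Eq.symm ?_)
  rw [eq_div_iff h2α]
  linear_combination (-1 : ℝ) * (2 * x * U1 α x + 4 * α * U α x) * ode hα x

set_option maxHeartbeats 2000000 in
theorem U_bound : ∃ M : ℝ, 0 ≤ M ∧ ∀ x : ℝ, 1 ≤ x →
    |U α x| ≤ M * x ^ (-(α + 1 / 2)) ∧ |U1 α x| ≤ M * x ^ (-(α + 1 / 2)) := by
  set K : ℝ := α ^ 2 - 1 / 4 with hKdef
  have hK : 0 ≤ K := by rw [hKdef]; nlinarith [sq_nonneg (α - 1/2)]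
  set W : ℝ → ℝ := fun x => x ^ (α + 1/2) * U α x with hWdef
  set W1 : ℝ → ℝ := fun x => (α + 1/2) * x ^ (α - 1/2) * U α x + x ^ (α + 1/2) * U1 α x
    with hW1def
  set W2 : ℝ → ℝ := fun x => (α + 1/2) * (α - 1/2) * x ^ (α - 3/2) * U α x
    + 2 * (α + 1/2) * x ^ (α - 1/2) * U1 α x + x ^ (α + 1/2) * U2 α x with hW2def
  have hW : ∀ x : ℝ, 0 < x → HasDerivAt W (W1 x) x := by
    intro x hx
    have hr : HasDerivAt (fun y : ℝ => y ^ (α + 1/2)) ((α + 1/2) * x ^ (α - 1/2)) x := by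
      have := Real.hasDerivAt_rpow_const (x := x) (p := α + 1/2) (Or.inl hx.ne')
      rwa [show α + 1/2 - 1 = α - 1/2 by ring] at this
    simp only [hWdef, hW1def]
    exact hr.mul (hasDerivAt_U hα x)
  have hW1 : ∀ x : ℝ, 0 < x → HasDerivAt W1 (W2 x) x := by
    intro x hx
    have hr1 : HasDerivAt (fun y : ℝ => (α + 1/2) * y ^ (α - 1/2)) ((α + 1/2) * ((α - 3/2 + 1)
        * x ^ (α - 3/2))) x := by
      have := Real.hasDerivAt_rpow_const (x := x) (p := α - 1/2) (Or.inl hx.ne')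
      rw [show α - 1/2 - 1 = α - 3/2 by ring] at this
      have h2 := this.const_mul (α + 1/2)
      refine h2.congr_deriv ?_
      ring
    have hr2 : HasDerivAt (fun y : ℝ => y ^ (α + 1/2)) ((α + 1/2) * x ^ (α - 1/2)) x := by
      have := Real.hasDerivAt_rpow_const (x := x) (p := α + 1/2) (Or.inl hx.ne')
      rwa [show α + 1/2 - 1 = α - 1/2 by ring] at this
    have := (hr1.fun_mul (hasDerivAt_U hα x)).fun_add (hr2.fun_mul (hasDerivAt_U1 hα x))
    refine this.congr_deriv (Eq.symm ?_)
    simp only [hW2def, hW1def]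
    ring
  have hKey : ∀ x : ℝ, 0 < x → x ^ 2 * (W2 x + W x) = K * W x := by
    intro x hx
    have e1 : x ^ (α - 1/2) = x ^ (α - 3/2) * x := by
      rw [show α - 1/2 = α - 3/2 + 1 by ring, Real.rpow_add_one hx.ne']
    have e2 : x ^ (α + 1/2) = x ^ (α - 3/2) * x * x := by
      rw [show α + 1/2 = α - 3/2 + 1 + 1 by ring, Real.rpow_add_one hx.ne',
        Real.rpow_add_one hx.ne']
    simp only [hW2def, hWdef, hKdef, e1, e2]
    linear_combination (x ^ (α - 3/2) * x ^ 3) * ode hα x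
  set G : ℝ → ℝ := fun x => (W x) ^ 2 + (W1 x) ^ 2 with hGdef
  have hG : ∀ x : ℝ, 0 < x → HasDerivAt G (2 * W x * W1 x + 2 * W1 x * W2 x) x := by
    intro x hx
    have := ((hW x hx).fun_pow 2).fun_add ((hW1 x hx).fun_pow 2)
    refine this.congr_deriv ?_
    ring
  set φ : ℝ → ℝ := fun x => G x * Real.exp (K / x) with hφdef
  have hφ : ∀ x : ℝ, 0 < x → HasDerivAt φ
      ((2 * W x * W1 x + 2 * W1 x * W2 x) * Real.exp (K / x)
        + G x * (Real.exp (K / x) * (K * -(x ^ 2)⁻¹))) x := by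
    intro x hx
    have hin : HasDerivAt (fun y : ℝ => K / y) (K * -(x ^ 2)⁻¹) x := by
      simpa [div_eq_mul_inv] using (hasDerivAt_inv hx.ne').const_mul K
    exact (hG x hx).mul hin.exp
  have hφ' : ∀ x : ℝ, 1 ≤ x → (2 * W x * W1 x + 2 * W1 x * W2 x) * Real.exp (K / x)
      + G x * (Real.exp (K / x) * (K * -(x ^ 2)⁻¹)) ≤ 0 := by
    intro x hx1
    have hx : (0:ℝ) < x := lt_of_lt_of_le one_pos hx1
    have hx2 : (0:ℝ) < x ^ 2 := by positivity
    have hE : (0:ℝ) < Real.exp (K / x) := Real.exp_pos _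
    have hkey := hKey x hx
    -- (2WW1 + 2W1W2) * x^2 = 2 K W W1 - 2 W W1 x^2 + 2 W W1 x^2 ... compute directly
    have hA : (2 * W x * W1 x + 2 * W1 x * W2 x) * x ^ 2 = 2 * K * W x * W1 x := by
      linear_combination (2 * W1 x) * hkey
    rw [show (2 * W x * W1 x + 2 * W1 x * W2 x) * Real.exp (K / x)
        + G x * (Real.exp (K / x) * (K * -(x ^ 2)⁻¹))
        = Real.exp (K / x) * ((2 * W x * W1 x + 2 * W1 x * W2 x) - G x * K / x ^ 2) by
          field_simp; ring]
    apply mul_nonpos_of_nonneg_of_nonpos hE.le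
    rw [sub_nonpos, le_div_iff₀ hx2]
    calc (2 * W x * W1 x + 2 * W1 x * W2 x) * x ^ 2 = 2 * K * W x * W1 x := hA
      _ ≤ K * ((W x) ^ 2 + (W1 x) ^ 2) := by nlinarith [sq_nonneg (W x - W1 x)]
      _ = G x * K := by rw [hGdef]; ring
  have hmono : AntitoneOn φ (Set.Ici (1:ℝ)) := by
    have hconv : Convex ℝ (Set.Ici (1:ℝ)) := convex_Ici 1
    refine antitoneOn_of_deriv_nonpos hconv ?_ ?_ ?_
    · intro x hx
      have hx0 : (0:ℝ) < x := lt_of_lt_of_le one_pos hx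
      exact (hφ x hx0).continuousAt.continuousWithinAt
    · intro x hx
      rw [interior_Ici] at hx
      have hx0 : (0:ℝ) < x := lt_trans one_pos hx
      exact (hφ x hx0).differentiableAt.differentiableWithinAt
    · intro x hx
      rw [interior_Ici] at hx
      have hx0 : (0:ℝ) < x := lt_trans one_pos hx
      rw [(hφ x hx0).deriv]
      exact hφ' x hx.le
  set C : ℝ := φ 1 with hCdef
  have hGC : ∀ x : ℝ, 1 ≤ x → G x ≤ C := by
    intro x hx
    have hx0 : (0:ℝ) < x := lt_of_lt_of_le one_pos hx
    have h1 : G x ≤ φ x := by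
      rw [hφdef]
      have hGnn : 0 ≤ G x := by rw [hGdef]; positivity
      have h2 : (1:ℝ) ≤ Real.exp (K / x) := by
        rw [show (1:ℝ) = Real.exp 0 from (Real.exp_zero).symm]
        exact Real.exp_le_exp.2 (by positivity)
      exact le_mul_of_one_le_right hGnn h2
    exact h1.trans (hmono (Set.self_mem_Ici) hx hx)
  have hCnn : 0 ≤ C := by
    have hG1 : G 1 = W 1 ^ 2 + W1 1 ^ 2 := rfl
    have := hGC 1 le_rfl
    nlinarith [sq_nonneg (W 1), sq_nonneg (W1 1)]
  set S : ℝ := Real.sqrt C with hSdef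
  have hSnn : 0 ≤ S := Real.sqrt_nonneg C
  have hWle : ∀ x : ℝ, 1 ≤ x → |W x| ≤ S ∧ |W1 x| ≤ S := by
    intro x hx
    have hGx : G x = W x ^ 2 + W1 x ^ 2 := rfl
    constructor
    · rw [← Real.sqrt_sq_eq_abs, hSdef]
      apply Real.sqrt_le_sqrt
      nlinarith [sq_nonneg (W1 x), hGC x hx, hGx]
    · rw [← Real.sqrt_sq_eq_abs, hSdef]
      apply Real.sqrt_le_sqrt
      nlinarith [sq_nonneg (W x), hGC x hx, hGx]
  refine ⟨(α + 3/2) * S, by positivity, fun x hx => ?_⟩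
  have hx0 : (0:ℝ) < x := lt_of_lt_of_le one_pos hx
  have hp : (0:ℝ) < x ^ (α + 1/2) := Real.rpow_pos_of_pos hx0 _
  have hneg : x ^ (-(α + 1/2)) = (x ^ (α + 1/2))⁻¹ := Real.rpow_neg hx0.le _
  obtain ⟨hW_le, hW1_le⟩ := hWle x hx
  have hUle : |U α x| ≤ S * x ^ (-(α + 1/2)) := by
    have hWx : U α x = W x / x ^ (α + 1/2) := by
      rw [hWdef]; field_simp
    rw [hWx, abs_div, abs_of_pos hp, div_le_iff₀ hp, hneg]
    calc |W x| ≤ S := hW_le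
      _ = S * 1 := by ring
      _ ≤ S * ((x ^ (α + 1/2))⁻¹ * x ^ (α + 1/2)) := by
          rw [inv_mul_cancel₀ hp.ne']
      _ = S * (x ^ (α + 1/2))⁻¹ * x ^ (α + 1/2) := by ring
  constructor
  · calc |U α x| ≤ S * x ^ (-(α + 1/2)) := hUle
      _ ≤ (α + 3/2) * S * x ^ (-(α + 1/2)) := by
          have hpos : (0:ℝ) < x ^ (-(α + 1/2)) := Real.rpow_pos_of_pos hx0 _
          nlinarith [mul_nonneg (mul_nonneg (by linarith : (0:ℝ) ≤ α + 1/2) hSnn) hpos.le]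
  · -- bound on U1
    have hU1x : U1 α x = (W1 x - (α + 1/2) * x ^ (α - 1/2) * U α x) / x ^ (α + 1/2) := by
      rw [hW1def]; field_simp; ring
    have hmid : (α + 1/2) * x ^ (α - 1/2) * |U α x| ≤ (α + 1/2) * S := by
      have h1 : x ^ (α - 1/2) * |U α x| ≤ x ^ (α - 1/2) * (S * x ^ (-(α + 1/2))) := by
        have : (0:ℝ) < x ^ (α - 1/2) := Real.rpow_pos_of_pos hx0 _
        nlinarith [hUle]
      have h2 : x ^ (α - 1/2) * (S * x ^ (-(α + 1/2))) = S * x ^ (-(1:ℝ)) := by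
        rw [show x ^ (α - 1/2) * (S * x ^ (-(α + 1/2))) =
          S * (x ^ (α - 1/2) * x ^ (-(α + 1/2))) by ring, ← Real.rpow_add hx0,
          show α - 1/2 + -(α + 1/2) = -(1:ℝ) by ring]
      have h3 : x ^ (-(1:ℝ)) ≤ 1 := by
        rw [Real.rpow_neg_one]
        exact inv_le_one_of_one_le₀ hx
      have h4 : S * x ^ (-(1:ℝ)) ≤ S := by nlinarith [hSnn]
      have h5 : (0:ℝ) ≤ α + 1/2 := by linarith
      calc (α + 1/2) * x ^ (α - 1/2) * |U α x|
          = (α + 1/2) * (x ^ (α - 1/2) * |U α x|) := by ring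
        _ ≤ (α + 1/2) * (S * x ^ (-(1:ℝ))) :=
            mul_le_mul_of_nonneg_left (h1.trans (le_of_eq h2)) h5
        _ ≤ (α + 1/2) * S := by nlinarith
    rw [hU1x, abs_div, abs_of_pos hp, div_le_iff₀ hp, hneg]
    have hnum : |W1 x - (α + 1/2) * x ^ (α - 1/2) * U α x|
        ≤ S + (α + 1/2) * S := by
      calc |W1 x - (α + 1/2) * x ^ (α - 1/2) * U α x|
          ≤ |W1 x| + |(α + 1/2) * x ^ (α - 1/2) * U α x| := abs_sub _ _
        _ ≤ S + (α + 1/2) * S := by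
            apply add_le_add hW1_le
            have hq : (0:ℝ) < x ^ (α - 1/2) := Real.rpow_pos_of_pos hx0 _
            rw [abs_mul, abs_mul, abs_of_pos hq, abs_of_pos (by linarith : (0:ℝ) < α + 1/2)]
            exact hmid
    calc |W1 x - (α + 1/2) * x ^ (α - 1/2) * U α x| ≤ S + (α + 1/2) * S := hnum
      _ = (α + 3/2) * S * 1 := by ring
      _ ≤ (α + 3/2) * S * ((x ^ (α + 1/2))⁻¹ * x ^ (α + 1/2)) := by
          rw [inv_mul_cancel₀ hp.ne']
      _ = (α + 3/2) * S * (x ^ (α + 1/2))⁻¹ * x ^ (α + 1/2) := by ring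

theorem tendsto_FF : Tendsto (FF α) atTop (𝓝 0) := by
  obtain ⟨M, hM0, hMb⟩ := U_bound hα
  have hden : (0:ℝ) < 4 * α - 2 := by linarith
  set c : ℝ := (2 + 4 * α + 4 * α ^ 2) * M ^ 2 / (4 * α - 2) with hc
  have hb : ∀ x : ℝ, 1 ≤ x → ‖FF α x‖ ≤ c * x ^ (1 - 2 * α) := by
    intro x hx
    have hx0 : (0:ℝ) < x := lt_of_lt_of_le one_pos hx
    obtain ⟨hU, hU1⟩ := hMb x hx
    set p : ℝ := x ^ (-(α + 1/2)) with hpdef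
    have hp : (0:ℝ) < p := Real.rpow_pos_of_pos hx0 _
    set Q : ℝ := x ^ (-(2 * α + 1)) with hQdef
    set R : ℝ := x ^ (1 - 2 * α) with hRdef
    have hR : (0:ℝ) < R := Real.rpow_pos_of_pos hx0 _
    have hQ : (0:ℝ) < Q := Real.rpow_pos_of_pos hx0 _
    have hp2 : p ^ 2 = Q := by
      rw [hpdef, hQdef, ← Real.rpow_natCast (x ^ (-(α + 1/2))) 2, ← Real.rpow_mul hx0.le]
      congr 1
      push_cast
      ring
    have hx2Q : x ^ 2 * Q = R := by
      rw [hQdef, hRdef, ← Real.rpow_natCast x 2, ← Real.rpow_add hx0]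
      congr 1
      push_cast
      ring
    have hxQ : x * Q ≤ R := by
      have e : x * Q = x ^ (-(2 * α) : ℝ) := by
        rw [hQdef]
        nth_rewrite 1 [← Real.rpow_one x]
        rw [← Real.rpow_add hx0, show (1:ℝ) + -(2 * α + 1) = -(2 * α) by ring]
      rw [e, hRdef]
      exact Real.rpow_le_rpow_of_exponent_le hx (by linarith)
    have hQR : Q ≤ R := by
      rw [hQdef, hRdef]
      exact Real.rpow_le_rpow_of_exponent_le hx (by linarith)
    have hU1sq : U1 α x ^ 2 ≤ M ^ 2 * Q := by
      have h1 : |U1 α x| ^ 2 ≤ (M * p) ^ 2 := pow_le_pow_left₀ (abs_nonneg _) hU1 2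
      rw [sq_abs] at h1
      calc U1 α x ^ 2 ≤ (M * p) ^ 2 := h1
        _ = M ^ 2 * p ^ 2 := by ring
        _ = M ^ 2 * Q := by rw [hp2]
    have hUsq : U α x ^ 2 ≤ M ^ 2 * Q := by
      have h1 : |U α x| ^ 2 ≤ (M * p) ^ 2 := pow_le_pow_left₀ (abs_nonneg _) hU 2
      rw [sq_abs] at h1
      calc U α x ^ 2 ≤ (M * p) ^ 2 := h1
        _ = M ^ 2 * p ^ 2 := by ring
        _ = M ^ 2 * Q := by rw [hp2]
    have hUU1 : |U α x * U1 α x| ≤ M ^ 2 * Q := by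
      rw [abs_mul]
      calc |U α x| * |U1 α x| ≤ (M * p) * (M * p) :=
            mul_le_mul hU hU1 (abs_nonneg _) (by positivity)
        _ = M ^ 2 * p ^ 2 := by ring
        _ = M ^ 2 * Q := by rw [hp2]
    have hnum : |x ^ 2 * ((U1 α x) ^ 2 + (U α x) ^ 2) + 4 * α * x * U α x * U1 α x
        + 4 * α ^ 2 * (U α x) ^ 2| ≤ (2 + 4 * α + 4 * α ^ 2) * M ^ 2 * R := by
      have t1 : |x ^ 2 * ((U1 α x) ^ 2 + (U α x) ^ 2)| ≤ 2 * M ^ 2 * R := by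
        rw [abs_of_nonneg (by positivity)]
        have : (U1 α x) ^ 2 + (U α x) ^ 2 ≤ 2 * (M ^ 2 * Q) := by linarith
        calc x ^ 2 * ((U1 α x) ^ 2 + (U α x) ^ 2) ≤ x ^ 2 * (2 * (M ^ 2 * Q)) := by
              apply mul_le_mul_of_nonneg_left this (by positivity)
          _ = 2 * M ^ 2 * (x ^ 2 * Q) := by ring
          _ = 2 * M ^ 2 * R := by rw [hx2Q]
      have t2 : |4 * α * x * U α x * U1 α x| ≤ 4 * α * M ^ 2 * R := by
        have h4α : (0:ℝ) ≤ 4 * α := by linarith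
        rw [show 4 * α * x * U α x * U1 α x = (4 * α * x) * (U α x * U1 α x) by ring,
          abs_mul, abs_of_nonneg (by positivity : (0:ℝ) ≤ 4 * α * x)]
        calc 4 * α * x * |U α x * U1 α x| ≤ 4 * α * x * (M ^ 2 * Q) := by
              apply mul_le_mul_of_nonneg_left hUU1 (by positivity)
          _ = 4 * α * M ^ 2 * (x * Q) := by ring
          _ ≤ 4 * α * M ^ 2 * R := by
              apply mul_le_mul_of_nonneg_left hxQ (by positivity)
      have t3 : |4 * α ^ 2 * (U α x) ^ 2| ≤ 4 * α ^ 2 * M ^ 2 * R := by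
        rw [abs_of_nonneg (by positivity)]
        calc 4 * α ^ 2 * (U α x) ^ 2 ≤ 4 * α ^ 2 * (M ^ 2 * Q) := by
              apply mul_le_mul_of_nonneg_left hUsq (by positivity)
          _ = 4 * α ^ 2 * M ^ 2 * Q := by ring
          _ ≤ 4 * α ^ 2 * M ^ 2 * R := by
              apply mul_le_mul_of_nonneg_left hQR (by positivity)
      calc |x ^ 2 * ((U1 α x) ^ 2 + (U α x) ^ 2) + 4 * α * x * U α x * U1 α x
            + 4 * α ^ 2 * (U α x) ^ 2|
          ≤ |x ^ 2 * ((U1 α x) ^ 2 + (U α x) ^ 2) + 4 * α * x * U α x * U1 α x|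
            + |4 * α ^ 2 * (U α x) ^ 2| := abs_add_le _ _
        _ ≤ |x ^ 2 * ((U1 α x) ^ 2 + (U α x) ^ 2)| + |4 * α * x * U α x * U1 α x|
            + |4 * α ^ 2 * (U α x) ^ 2| := by
              have := abs_add_le (x ^ 2 * ((U1 α x) ^ 2 + (U α x) ^ 2))
                (4 * α * x * U α x * U1 α x)
              linarith
        _ ≤ 2 * M ^ 2 * R + 4 * α * M ^ 2 * R + 4 * α ^ 2 * M ^ 2 * R := by
              linarith
        _ = (2 + 4 * α + 4 * α ^ 2) * M ^ 2 * R := by ring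
    rw [FF, Real.norm_eq_abs, abs_div, abs_of_neg (by linarith : 2 - 4 * α < 0)]
    rw [div_le_iff₀ (by linarith : (0:ℝ) < -(2 - 4 * α)), hc]
    calc |x ^ 2 * ((U1 α x) ^ 2 + (U α x) ^ 2) + 4 * α * x * U α x * U1 α x
          + 4 * α ^ 2 * (U α x) ^ 2| ≤ (2 + 4 * α + 4 * α ^ 2) * M ^ 2 * R := hnum
      _ = (2 + 4 * α + 4 * α ^ 2) * M ^ 2 / (4 * α - 2) * x ^ (1 - 2 * α) * -(2 - 4 * α) := by
          rw [hRdef]; field_simp; try ring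
  have hg : Tendsto (fun x : ℝ => c * x ^ (1 - 2 * α)) atTop (𝓝 0) := by
    have h1 : Tendsto (fun x : ℝ => x ^ (1 - 2 * α)) atTop (𝓝 0) := by
      rw [show (1 - 2 * α) = -(2 * α - 1) by ring]
      exact tendsto_rpow_neg_atTop (by linarith)
    have h2 : Tendsto (fun x : ℝ => c * x ^ (1 - 2 * α)) atTop (𝓝 (c * 0)) :=
      h1.const_mul c
    rwa [mul_zero] at h2
  exact squeeze_zero_norm' (Filter.eventually_atTop.2 ⟨1, hb⟩) hg

theorem continuous_integrand : Continuous (fun x => (U α x) ^ 2 * x) := by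
  have hcU : Continuous (U α) := by
    rw [continuous_iff_continuousAt]
    exact fun x => (hasDerivAt_U hα x).continuousAt
  exact (hcU.pow 2).mul continuous_id

theorem integrable_main : IntegrableOn (fun x => (U α x) ^ 2 * x) (Ioi 0) := by
  have hcont := continuous_integrand hα
  rw [show Ioi (0:ℝ) = Ioc 0 1 ∪ Ioi 1 from (Set.Ioc_union_Ioi_eq_Ioi zero_le_one).symm]
  apply IntegrableOn.union
  · exact hcont.integrableOn_Ioc
  · obtain ⟨M, hM0, hMb⟩ := U_bound hα
    have hi : IntegrableOn (fun x : ℝ => M ^ 2 * x ^ (-(2 * α))) (Ioi 1) :=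
      (integrableOn_Ioi_rpow_of_lt (by linarith) one_pos).const_mul _
    apply Integrable.mono' hi (hcont.aestronglyMeasurable.restrict)
    rw [ae_restrict_iff' measurableSet_Ioi]
    apply Filter.Eventually.of_forall
    intro x hx
    have hx1 : (1:ℝ) ≤ x := le_of_lt hx
    have hx0 : (0:ℝ) < x := lt_trans one_pos hx
    obtain ⟨hU, _⟩ := hMb x hx1
    have hp : (0:ℝ) < x ^ (-(α + 1/2)) := Real.rpow_pos_of_pos hx0 _
    have hU2 : U α x ^ 2 ≤ M ^ 2 * x ^ (-(2 * α + 1)) := by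
      have h1 : |U α x| ^ 2 ≤ (M * x ^ (-(α + 1/2))) ^ 2 :=
        pow_le_pow_left₀ (abs_nonneg _) hU 2
      rw [sq_abs] at h1
      have h2 : (x ^ (-(α + 1/2))) ^ 2 = x ^ (-(2 * α + 1)) := by
        rw [← Real.rpow_natCast (x ^ (-(α + 1/2))) 2, ← Real.rpow_mul hx0.le]
        congr 1
        push_cast
        ring
      nlinarith [sq_nonneg (x ^ (-(α + 1/2)))]
    rw [Real.norm_eq_abs, abs_of_nonneg (by positivity : (0:ℝ) ≤ U α x ^ 2 * x)]
    have key : x ^ (-(2 * α + 1)) * x = x ^ (-(2 * α)) := by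
      nth_rewrite 2 [← Real.rpow_one x]
      rw [← Real.rpow_add hx0, show -(2 * α + 1) + 1 = -(2 * α) by ring]
    calc U α x ^ 2 * x ≤ M ^ 2 * x ^ (-(2 * α + 1)) * x :=
          mul_le_mul_of_nonneg_right hU2 hx0.le
      _ = M ^ 2 * (x ^ (-(2 * α + 1)) * x) := by ring
      _ = M ^ 2 * x ^ (-(2 * α)) := by rw [key]

theorem integral_main :
    (∫ x in Set.Ioi (0 : ℝ), (U α x) ^ 2 * x) = 4 * α ^ 2 / (4 * α - 2) := by
  have hInt := integrable_main hα
  have h1 : Tendsto (fun b => ∫ x in (0:ℝ)..b, U α x ^ 2 * x) atTop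
      (𝓝 (∫ x in Set.Ioi (0:ℝ), U α x ^ 2 * x)) :=
    intervalIntegral_tendsto_integral_Ioi 0 hInt tendsto_id
  have h2 : ∀ b : ℝ, (∫ x in (0:ℝ)..b, U α x ^ 2 * x) = FF α b - FF α 0 := fun b =>
    intervalIntegral.integral_eq_sub_of_hasDerivAt (fun x _ => hasDerivAt_FF hα x)
      ((continuous_integrand hα).intervalIntegrable 0 b)
  have h3 : Tendsto (fun b => FF α b - FF α 0) atTop (𝓝 (0 - FF α 0)) :=
    (tendsto_FF hα).sub_const _
  rw [show (fun b => ∫ x in (0:ℝ)..b, U α x ^ 2 * x) = fun b => FF α b - FF α 0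
    from funext h2] at h1
  have hval := tendsto_nhds_unique h1 h3
  have hFF0 : FF α 0 = 4 * α ^ 2 / (2 - 4 * α) := by
    rw [FF, U_zero hα]
    norm_num
  rw [hval, hFF0]
  have hne : (2 - 4 * α) ≠ 0 := by intro h; linarith
  have hne2 : (4 * α - 2) ≠ 0 := by intro h; linarith
  field_simp
  ring

end alpha2

end BesselAux

theorem besselEta_sq_first_moment (α : ℝ) (hα : 1 / 2 < α) :
    (∫ x in Set.Ioi (0 : ℝ), (besselEta α x) ^ 2 * x) = 4 * α ^ 2 / (4 * α - 2) ∧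
      2 ≤ ∫ x in Set.Ioi (0 : ℝ), (besselEta α x) ^ 2 * x ∧
      ((∫ x in Set.Ioi (0 : ℝ), (besselEta α x) ^ 2 * x) = 2 ↔ α = 1) := by
  have hrw : (∫ x in Set.Ioi (0 : ℝ), (besselEta α x) ^ 2 * x)
      = ∫ x in Set.Ioi (0 : ℝ), (BesselAux.U α x) ^ 2 * x := by
    congr 1
    funext x
    rw [BesselAux.besselEta_eq hα]
  rw [hrw, BesselAux.integral_main hα]
  have hden : (0:ℝ) < 4 * α - 2 := by linarith
  refine ⟨rfl, ?_, ?_⟩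
  · rw [le_div_iff₀ hden]
    nlinarith [sq_nonneg (α - 1)]
  · constructor
    · intro h
      rw [div_eq_iff hden.ne'] at h
      have h2 : (α - 1) ^ 2 = 0 := by nlinarith
      have h3 : α - 1 = 0 := by
        nlinarith [sq_nonneg (α - 1), sq_abs (α - 1), abs_nonneg (α - 1)]
      linarith
    · rintro rfl
      norm_num
end
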